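/- (Asymptotic behavior of B̃(−t).) Let 0 < p < 1, n ≥ 1, and let λ ∈ ℂ be nonzero with |arg λ| < pπ/2. Then α := Re(λ^{1/p}) > 0, and there exist constants c₀, …, c_{n−1} > 0 such that for all t > 0, ‖B̃_n(−t,λ)‖ ≤ ∑_{m=0}^{n−1} (c_m / p^{m+1}) t^{m+1} e^{−tα}, where ‖·‖ is the operator norm on n×n complex matrices. -/

import Mathlib

open Filter Asymptotics MeasureTheory

noncomputable def psi (p : ℝ) (m : ℕ) (t : ℝ) (lam : ℂ) : ℂ :=
  (1 / (m.factorial : ℂ)) *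
    iteratedDeriv m (fun z : ℂ => (1 / (p : ℂ)) * Complex.exp ((t : ℂ) * z ^ (1 / (p : ℂ)))) lam

noncomputable def psiT (p : ℝ) (m : ℕ) (t : ℝ) (lam : ℂ) : ℂ :=
  (1 / (m.factorial : ℂ)) *
    iteratedDeriv (m + 1) (fun z : ℂ => Complex.exp ((t : ℂ) * z ^ (1 / (p : ℂ)))) lam

noncomputable def mlEM {ι : Type*} [Fintype ι] [DecidableEq ι] (p β : ℝ) (M : Matrix ι ι ℂ) :
    Matrix ι ι ℂ :=
  ∑' k : ℕ, (Complex.Gamma ((p * k + β : ℝ) : ℂ))⁻¹ • M ^ k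

def jordanBlock (n : ℕ) (lam : ℂ) : Matrix (Fin n) (Fin n) ℂ :=
  Matrix.of fun i j => if i = j then lam else if (i : ℕ) + 1 = (j : ℕ) then 1 else 0

noncomputable def BMat (p : ℝ) (n : ℕ) (t : ℝ) (lam : ℂ) : Matrix (Fin n) (Fin n) ℂ :=
  Matrix.of fun i j => if (i : ℕ) ≤ (j : ℕ) then psi p ((j : ℕ) - (i : ℕ)) t lam else 0

noncomputable def BTMat (p : ℝ) (n : ℕ) (t : ℝ) (lam : ℂ) : Matrix (Fin n) (Fin n) ℂ :=
  Matrix.of fun i j => if (i : ℕ) ≤ (j : ℕ) then psiT p ((j : ℕ) - (i : ℕ)) t lam else 0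

noncomputable def opNorm {ι : Type*} [Fintype ι] [DecidableEq ι] (M : Matrix ι ι ℂ) : ℝ :=
  ‖LinearMap.toContinuousLinearMap (Matrix.toEuclideanLin M)‖

namespace Stmt4Aux

open Complex

lemma cpow_aux (c : ℂ) : AnalyticOnNhd ℂ (fun z : ℂ => z ^ c) slitPlane :=
  analyticOnNhd_id.cpow analyticOnNhd_const (fun _ hz => hz)

lemma sum_alg (k : ℕ) (a : ℕ → ℂ → ℂ) (z w E P : ℂ) (D : ℕ → ℂ)
    (hd : D (k+1) = 0) :
    E * (w * P) * (∑ j ∈ Finset.range (k+1), a j z * w ^ (j+1))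
      + E * ∑ j ∈ Finset.range (k+1), D j * w ^ (j+1)
    = E * (∑ j ∈ Finset.range (k+1),
        (D j + (if j = 0 then 0 else P * a (j-1) z)) * w ^ (j+1)
        + (D (k+1) + (if k+1 = 0 then 0 else P * a (k+1-1) z)) * w ^ (k+1+1)) := by
  simp only [hd, Nat.succ_ne_zero, if_false, Nat.add_sub_cancel, zero_add, add_mul]
  rw [Finset.sum_add_distrib,
    Finset.sum_range_succ' (fun j => (if j = 0 then 0 else P * a (j-1) z) * w ^ (j+1))]
  simp only [if_pos rfl, zero_mul, add_zero, Nat.succ_ne_zero, if_false, Nat.add_sub_cancel,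
    if_true, eq_self_iff_true]
  rw [add_assoc, ← Finset.sum_range_succ (fun i => P * a i z * w ^ (i+1+1))]
  rw [Finset.mul_sum, mul_add, Finset.mul_sum, Finset.mul_sum]
  rw [add_comm (∑ j ∈ Finset.range (k+1), E * (D j * w ^ (j+1)))]
  congr 1
  exact Finset.sum_congr rfl fun j _ => by ring

lemma iter_deriv_exp_cpow (c : ℂ) (k : ℕ) :
    ∃ a : ℕ → ℂ → ℂ, (∀ j, AnalyticOnNhd ℂ (a j) slitPlane) ∧
      (∀ j, k + 1 ≤ j → a j = fun _ => 0) ∧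
      ∀ (w z : ℂ), z ∈ slitPlane →
        iteratedDeriv (k + 1) (fun ζ : ℂ => Complex.exp (w * ζ ^ c)) z
          = Complex.exp (w * z ^ c) * ∑ j ∈ Finset.range (k + 1), a j z * w ^ (j + 1) := by
  induction k with
  | zero =>
    refine ⟨fun j z => if j = 0 then c * z ^ (c - 1) else 0, ?_, ?_, ?_⟩
    · intro j
      rcases Nat.eq_zero_or_pos j with h | h
      · simp only [h, if_pos rfl]
        exact analyticOnNhd_const.mul (cpow_aux (c - 1))
      · simp only [Nat.pos_iff_ne_zero.mp h, if_false]
        exact analyticOnNhd_const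
    · intro j hj; simp [Nat.one_le_iff_ne_zero.mp hj]
    · intro w z hz
      rw [iteratedDeriv_one]
      have h1 : HasDerivAt (fun ζ : ℂ => Complex.exp (w * ζ ^ c))
          (Complex.exp (w * z ^ c) * (w * (c * z ^ (c - 1)))) z :=
        (((Complex.hasStrictDerivAt_cpow_const hz).hasDerivAt).const_mul w).cexp
      rw [h1.deriv]
      simp; ring
  | succ k ih =>
    obtain ⟨a, ha, ha0, hfor⟩ := ih
    refine ⟨fun j z => deriv (a j) z
        + (if j = 0 then 0 else c * z ^ (c - 1) * a (j - 1) z), ?_, ?_, ?_⟩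
    · intro j
      apply ((ha j).deriv).add
      rcases Nat.eq_zero_or_pos j with h | h
      · simp only [h, if_pos rfl]; exact analyticOnNhd_const
      · simp only [Nat.pos_iff_ne_zero.mp h, if_false]
        exact (analyticOnNhd_const.mul (cpow_aux (c - 1))).mul (ha (j - 1))
    · intro j hj
      funext z
      have h1 : a j = fun _ => 0 := ha0 j (le_trans (Nat.le_succ _) hj)
      have h2 : a (j - 1) = fun _ => 0 := ha0 _ (by omega)
      have hjne : j ≠ 0 := by omega
      simp [h1, h2, hjne]
    · intro w z hz
      have heq : iteratedDeriv (k + 1) (fun ζ : ℂ => Complex.exp (w * ζ ^ c))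
          =ᶠ[nhds z] fun ζ => Complex.exp (w * ζ ^ c)
            * ∑ j ∈ Finset.range (k + 1), a j ζ * w ^ (j + 1) := by
        filter_upwards [isOpen_slitPlane.eventually_mem hz] with ζ hζ
        exact hfor w ζ hζ
      rw [iteratedDeriv_succ, heq.deriv_eq]
      have hexp : HasDerivAt (fun ζ : ℂ => Complex.exp (w * ζ ^ c))
          (Complex.exp (w * z ^ c) * (w * (c * z ^ (c - 1)))) z :=
        (((Complex.hasStrictDerivAt_cpow_const hz).hasDerivAt).const_mul w).cexp
      have hS : HasDerivAt (fun ζ => ∑ j ∈ Finset.range (k + 1), a j ζ * w ^ (j + 1))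
          (∑ j ∈ Finset.range (k + 1), deriv (a j) z * w ^ (j + 1)) z := by
        apply HasDerivAt.fun_sum
        intro j _
        exact (((ha j z hz).differentiableAt).hasDerivAt).mul_const _
      rw [(hexp.fun_mul hS).deriv]
      have hd : deriv (a (k + 1)) z = 0 := by
        rw [ha0 (k + 1) le_rfl]; exact deriv_const _ _
      rw [Finset.sum_range_succ (fun j => (deriv (a j) z
          + (if j = 0 then 0 else c * z ^ (c - 1) * a (j - 1) z)) * w ^ (j + 1))]
      exact sum_alg k a z w _ _ (fun j => deriv (a j) z) hd

lemma opNorm_le_sum {ι : Type*} [Fintype ι] [DecidableEq ι] (M : Matrix ι ι ℂ) :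
    opNorm M ≤ ∑ i, ∑ j, ‖M i j‖ := by
  apply ContinuousLinearMap.opNorm_le_bound
  · positivity
  intro x
  rw [LinearMap.coe_toContinuousLinearMap']
  have hx : ∀ j, ‖x j‖ ≤ ‖x‖ := by
    intro j
    rw [EuclideanSpace.norm_eq]
    calc ‖x j‖ = Real.sqrt (‖x j‖ ^ 2) := (Real.sqrt_sq (norm_nonneg _)).symm
    _ ≤ _ := by
        apply Real.sqrt_le_sqrt
        exact Finset.single_le_sum (f := fun j => ‖x j‖ ^ 2)
          (fun i _ => sq_nonneg _) (Finset.mem_univ j)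
  have hcoord : ∀ i, ‖Matrix.toEuclideanLin M x i‖ ≤ (∑ j, ‖M i j‖) * ‖x‖ := by
    intro i
    have : Matrix.toEuclideanLin M x i = ∑ j, M i j * x j := by
      rw [Matrix.toEuclideanLin_apply]
      rfl
    rw [this, Finset.sum_mul]
    refine (norm_sum_le _ _).trans (Finset.sum_le_sum fun j _ => ?_)
    rw [norm_mul]
    exact mul_le_mul_of_nonneg_left (hx j) (norm_nonneg _)
  calc ‖Matrix.toEuclideanLin M x‖
      = Real.sqrt (∑ i, ‖Matrix.toEuclideanLin M x i‖ ^ 2) := EuclideanSpace.norm_eq _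
    _ ≤ Real.sqrt ((∑ i, ‖Matrix.toEuclideanLin M x i‖) ^ 2) := by
        apply Real.sqrt_le_sqrt
        exact Finset.sum_sq_le_sq_sum_of_nonneg (fun i _ => norm_nonneg _)
    _ = ∑ i, ‖Matrix.toEuclideanLin M x i‖ := Real.sqrt_sq (by positivity)
    _ ≤ ∑ i, (∑ j, ‖M i j‖) * ‖x‖ := Finset.sum_le_sum fun i _ => hcoord i
    _ = (∑ i, ∑ j, ‖M i j‖) * ‖x‖ := by rw [Finset.sum_mul]

end Stmt4Aux

open Complex Stmt4Aux in
theorem stmt_4 (p : ℝ) (hp0 : 0 < p) (hp1 : p < 1)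
    (n : ℕ) (hn : 1 ≤ n) (lam : ℂ) (hlam : lam ≠ 0)
    (harg : |Complex.arg lam| < p * Real.pi / 2) :
    0 < (lam ^ (1 / (p : ℂ))).re ∧
      ∃ c : ℕ → ℝ, (∀ m < n, 0 < c m) ∧
        ∀ t > (0 : ℝ),
          opNorm (BTMat p n (-t) lam)
            ≤ ∑ m ∈ Finset.range n,
                c m / p ^ (m + 1) * t ^ (m + 1)
                  * Real.exp (-t * (lam ^ (1 / (p : ℂ))).re) := by
  have hpi : 0 < Real.pi := Real.pi_pos
  have habs : |Complex.arg lam| < Real.pi / 2 := by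
    calc |Complex.arg lam| < p * Real.pi / 2 := harg
    _ < Real.pi / 2 := by nlinarith
  have hslit : lam ∈ slitPlane := by
    rw [Complex.mem_slitPlane_iff_arg]
    exact ⟨fun h => by rw [h, abs_of_pos hpi] at habs; linarith, hlam⟩
  have hα : 0 < (lam ^ (1 / (p : ℂ))).re := by
    rw [Complex.cpow_def_of_ne_zero hlam, Complex.exp_re]
    apply mul_pos (Real.exp_pos _)
    apply Real.cos_pos_of_mem_Ioo
    have him : (Complex.log lam * (1 / (p : ℂ))).im = (1 / p) * Complex.arg lam := by
      have h : (1 / (p : ℂ)) = ((1 / p : ℝ) : ℂ) := by push_cast; ring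
      rw [mul_comm, h, Complex.im_ofReal_mul, Complex.log_im]
    rw [him]
    have key : |(1 / p) * lam.arg| < Real.pi / 2 := by
      rw [abs_mul, abs_of_pos (by positivity : (0:ℝ) < 1/p)]
      calc (1/p) * |lam.arg| < (1/p) * (p * Real.pi / 2) :=
            mul_lt_mul_of_pos_left harg (by positivity)
      _ = Real.pi / 2 := by field_simp
    exact abs_lt.mp key
  refine ⟨hα, ?_⟩
  set α : ℝ := (lam ^ (1 / (p : ℂ))).re with hαdef
  choose a han hzero hform using iter_deriv_exp_cpow (1 / (p : ℂ))
  set Dc : ℕ → ℝ := fun j => ∑ m ∈ Finset.range n,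
      (if j < m + 1 then (1 / (m.factorial : ℝ)) * ‖a m j lam‖ else 0) with hDc
  have hDcnn : ∀ j, 0 ≤ Dc j := by
    intro j
    apply Finset.sum_nonneg
    intro m _
    split
    · positivity
    · exact le_rfl
  refine ⟨fun j => p ^ (j+1) * ((n:ℝ)^2 * Dc j + 1), ?_, ?_⟩
  · intro m _
    have := hDcnn m
    have hnn : (0:ℝ) ≤ (n:ℝ)^2 * Dc m := by positivity
    exact mul_pos (pow_pos hp0 _) (by linarith)
  · intro t ht
    have hw : ‖((-t : ℝ) : ℂ)‖ = t := by
      rw [Complex.norm_real, Real.norm_eq_abs, abs_neg, abs_of_pos ht]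
    have hpsiT : ∀ m : ℕ, ‖psiT p m (-t) lam‖
        ≤ (∑ j ∈ Finset.range (m+1), (1/(m.factorial:ℝ)) * ‖a m j lam‖ * t^(j+1))
            * Real.exp (-t * α) := by
      intro m
      have hexpn : ‖Complex.exp (((-t : ℝ) : ℂ) * lam ^ (1 / (p:ℂ)))‖ = Real.exp (-t * α) := by
        rw [Complex.norm_exp, Complex.re_ofReal_mul]
      calc ‖psiT p m (-t) lam‖
          = (1/(m.factorial:ℝ)) * (Real.exp (-t * α)
              * ‖∑ j ∈ Finset.range (m+1), a m j lam * ((-t:ℝ):ℂ) ^ (j+1)‖) := by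
            rw [psiT, hform m ((-t:ℝ):ℂ) lam hslit, norm_mul, norm_mul, hexpn]
            congr 1
            rw [norm_div, norm_one, Complex.norm_natCast]
        _ ≤ (1/(m.factorial:ℝ)) * (Real.exp (-t * α)
              * ∑ j ∈ Finset.range (m+1), ‖a m j lam‖ * t^(j+1)) := by
            gcongr
            refine (norm_sum_le _ _).trans (Finset.sum_le_sum fun j _ => ?_)
            rw [norm_mul, norm_pow, hw]
        _ = (∑ j ∈ Finset.range (m+1), (1/(m.factorial:ℝ)) * ‖a m j lam‖ * t^(j+1))
              * Real.exp (-t * α) := by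
            simp only [Finset.mul_sum, Finset.sum_mul]
            exact Finset.sum_congr rfl fun j _ => by ring
    have hE : ∀ i j : Fin n, ‖BTMat p n (-t) lam i j‖
        ≤ ∑ m ∈ Finset.range n, ‖psiT p m (-t) lam‖ := by
      intro i j
      rw [BTMat]
      simp only [Matrix.of_apply]
      split
      · exact Finset.single_le_sum (f := fun m => ‖psiT p m (-t) lam‖)
          (fun m _ => norm_nonneg _) (Finset.mem_range.mpr (by omega))
      · simp only [norm_zero]
        exact Finset.sum_nonneg fun m _ => norm_nonneg _
    have hsum : ∑ m ∈ Finset.range n, ‖psiT p m (-t) lam‖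
        ≤ (∑ j ∈ Finset.range n, Dc j * t^(j+1)) * Real.exp (-t * α) := by
      calc ∑ m ∈ Finset.range n, ‖psiT p m (-t) lam‖
          ≤ ∑ m ∈ Finset.range n,
              (∑ j ∈ Finset.range (m+1), (1/(m.factorial:ℝ)) * ‖a m j lam‖ * t^(j+1))
                * Real.exp (-t * α) := Finset.sum_le_sum fun m _ => hpsiT m
        _ = (∑ m ∈ Finset.range n, ∑ j ∈ Finset.range n,
              (if j < m + 1 then (1/(m.factorial:ℝ)) * ‖a m j lam‖ else 0) * t^(j+1))
                * Real.exp (-t * α) := by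
            rw [← Finset.sum_mul]
            congr 1
            refine Finset.sum_congr rfl fun m hm => ?_
            have hmn : m + 1 ≤ n := Finset.mem_range.mp hm
            rw [← Finset.sum_subset (Finset.range_subset_range.mpr hmn)
              (fun j _ hj => by
                rw [if_neg (by simpa using hj), zero_mul])]
            exact Finset.sum_congr rfl fun j hj => by
              rw [if_pos (Finset.mem_range.mp hj)]
        _ = (∑ j ∈ Finset.range n, Dc j * t^(j+1)) * Real.exp (-t * α) := by
            rw [Finset.sum_comm]
            congr 1
            refine Finset.sum_congr rfl fun j _ => ?_
            simp only [hDc]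
            rw [Finset.sum_mul]
    calc opNorm (BTMat p n (-t) lam)
        ≤ ∑ i : Fin n, ∑ j : Fin n, ‖BTMat p n (-t) lam i j‖ := opNorm_le_sum _
      _ ≤ ∑ _i : Fin n, ∑ _j : Fin n, ∑ m ∈ Finset.range n, ‖psiT p m (-t) lam‖ :=
          Finset.sum_le_sum fun i _ => Finset.sum_le_sum fun j _ => hE i j
      _ = (n:ℝ)^2 * ∑ m ∈ Finset.range n, ‖psiT p m (-t) lam‖ := by
          simp [Finset.sum_const, Finset.card_univ]
          ring
      _ ≤ (n:ℝ)^2 * ((∑ j ∈ Finset.range n, Dc j * t^(j+1)) * Real.exp (-t * α)) := by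
          apply mul_le_mul_of_nonneg_left hsum (by positivity)
      _ = ∑ m ∈ Finset.range n, (n:ℝ)^2 * Dc m * t^(m+1) * Real.exp (-t * α) := by
          simp only [Finset.mul_sum, Finset.sum_mul]
          exact Finset.sum_congr rfl fun m _ => by ring
      _ ≤ ∑ m ∈ Finset.range n, ((n:ℝ)^2 * Dc m + 1) * t^(m+1) * Real.exp (-t * α) := by
          refine Finset.sum_le_sum fun m _ => ?_
          have h1 : (n:ℝ)^2 * Dc m ≤ (n:ℝ)^2 * Dc m + 1 := by linarith
          have h2 : (0:ℝ) ≤ t^(m+1) := by positivity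
          have h3 : (0:ℝ) ≤ Real.exp (-t * α) := Real.exp_nonneg _
          exact mul_le_mul_of_nonneg_right
            (mul_le_mul_of_nonneg_right h1 h2) h3
      _ = ∑ m ∈ Finset.range n,
            (p ^ (m+1) * ((n:ℝ)^2 * Dc m + 1)) / p ^ (m+1) * t^(m+1)
              * Real.exp (-t * α) := by
          refine Finset.sum_congr rfl fun m _ => ?_
          rw [mul_div_cancel_left₀ _ (pow_ne_zero _ hp0.ne' : (p:ℝ) ^ (m+1) ≠ 0)]
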